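/- arXiv:2212.12345 — 2 statements merged into one kernel-verified Lean document; each statement's English description precedes it below -/
import Mathlib

section
/- Let λ : [t_l, t_u] → ℝ be continuous with λ(t) = exp(β_i + β_j - d(t)) where d(t) ≥ 0 for all t, and suppose the probability of zero events of an inhomogeneous Poisson process with intensity λ on [t_l, t_u] is p⁰ = exp(-∫_{t_l}^{t_u} λ(t) dt), with 0 < p⁰ < 1. Then (1/(t_u - t_l)) ∫_{t_l}^{t_u} d(t) dt ≥ log((t_u - t_l)/(-log p⁰)) + β_i + β_j. -/
open Real MeasureTheory intervalIntegral Set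

/-- Lower bound on the average squared distance between two node trajectories in
terms of the probability `p⁰` of zero events of the inhomogeneous Poisson process
with intensity `exp (β_i + β_j - d t)`. -/
theorem average_sq_dist_lower_bound
    (tl tu : ℝ) (htu : tl < tu) (d : ℝ → ℝ)
    (hd : ContinuousOn d (Icc tl tu))
    (hd0 : ∀ t ∈ Icc tl tu, 0 ≤ d t)
    (βi βj : ℝ) (p0 : ℝ)
    (hp0 : p0 = Real.exp (-(∫ t in tl..tu, Real.exp (βi + βj - d t))))
    (hp0pos : 0 < p0) (hp0lt : p0 < 1) :
    Real.log ((tu - tl) / (-Real.log p0)) + βi + βj ≤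
      (1 / (tu - tl)) * ∫ t in tl..tu, d t := by
  have hsub : (0:ℝ) < tu - tl := by linarith
  have hIcc : uIcc tl tu = Icc tl tu := uIcc_of_le htu.le
  -- interval integrability
  have hdint : IntervalIntegrable d volume tl tu :=
    (hd.mono (by rw [hIcc])).intervalIntegrable
  have hexpint : IntervalIntegrable (fun t => Real.exp (-d t)) volume tl tu := by
    apply ContinuousOn.intervalIntegrable
    rw [hIcc]
    exact (hd.neg).rexp
  set I := ∫ t in tl..tu, Real.exp (-d t) with hI
  have hIpos : 0 < I := by
    apply intervalIntegral.intervalIntegral_pos_of_pos_on hexpint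
    · intro x _; exact Real.exp_pos _
    · exact htu
  -- rewrite the integral in hp0
  have hsplit : (∫ t in tl..tu, Real.exp (βi + βj - d t)) = Real.exp (βi + βj) * I := by
    rw [hI, ← intervalIntegral.integral_const_mul]
    apply intervalIntegral.integral_congr
    intro x _
    simp only [← Real.exp_add]
    ring_nf
  have hlogp0 : -Real.log p0 = Real.exp (βi + βj) * I := by
    rw [hp0, Real.log_exp, neg_neg, hsplit]
  -- Jensen's inequality
  set μ : Measure ℝ := volume.restrict (Icc tl tu) with hμ
  have hμuniv : μ univ = ENNReal.ofReal (tu - tl) := by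
    rw [hμ, Measure.restrict_apply_univ, Real.volume_Icc]
  haveI : IsFiniteMeasure μ := ⟨by rw [hμuniv]; exact ENNReal.ofReal_lt_top⟩
  haveI : NeZero μ := by
    refine ⟨fun h => ?_⟩
    have := hμuniv
    rw [h] at this
    simp only [Measure.coe_zero, Pi.zero_apply, eq_comm, ENNReal.ofReal_eq_zero] at this
    linarith
  have hfi : Integrable (fun t => -d t) μ := by
    rw [hμ]
    exact (hd.neg).integrableOn_Icc
  have hgi : Integrable (fun t => Real.exp (-d t)) μ := by
    rw [hμ]
    exact ((hd.neg).rexp).integrableOn_Icc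
  have hjen : Real.exp (⨍ x, -d x ∂μ) ≤ ⨍ x, Real.exp (-d x) ∂μ :=
    convexOn_exp.map_average_le continuous_exp.continuousOn isClosed_univ
      (Filter.Eventually.of_forall fun x => mem_univ _) hfi hgi
  -- convert averages to interval integrals
  have hIcc_Ioc : ∀ f : ℝ → ℝ, (∫ x, f x ∂μ) = ∫ t in tl..tu, f t := by
    intro f
    rw [hμ, intervalIntegral.integral_of_le htu.le, ← MeasureTheory.integral_Icc_eq_integral_Ioc]
  have havg : ∀ f : ℝ → ℝ, (⨍ x, f x ∂μ) = (tu - tl)⁻¹ * ∫ t in tl..tu, f t := by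
    intro f
    rw [MeasureTheory.average_eq, measureReal_def, hμuniv, ENNReal.toReal_ofReal hsub.le, smul_eq_mul, hIcc_Ioc]
  rw [havg, havg] at hjen
  have hnegint : (∫ t in tl..tu, -d t) = -∫ t in tl..tu, d t := by
    simp [intervalIntegral.integral_neg]
  rw [hnegint] at hjen
  set A : ℝ := (tu - tl)⁻¹ * ∫ t in tl..tu, d t with hA
  have hjen' : Real.exp (-A) ≤ (tu - tl)⁻¹ * I := by
    rw [hA, ← mul_neg]
    exact hjen
  -- conclude
  have hkey : (tu - tl) * Real.exp (-A) ≤ I := by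
    have h2 := mul_le_mul_of_nonneg_left hjen' hsub.le
    rwa [mul_inv_cancel_left₀ (ne_of_gt hsub)] at h2
  have hlog : Real.log ((tu - tl) * Real.exp (-A)) ≤ Real.log I :=
    Real.log_le_log (by positivity) hkey
  rw [Real.log_mul (ne_of_gt hsub) (Real.exp_ne_zero _), Real.log_exp] at hlog
  rw [hlogp0, Real.log_div (ne_of_gt hsub) (by positivity),
    Real.log_mul (Real.exp_ne_zero _) (ne_of_gt hIpos), Real.log_exp]
  have : (1 / (tu - tl)) * ∫ t in tl..tu, d t = A := by rw [hA]; ring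
  rw [this]
  linarith
end

section
/- Let d : [t_l, t_u] → ℝ be continuous nonnegative and bounded above by R, let β_i, β_j ∈ ℝ, and let p^> = 1 - exp(-exp(β_i + β_j) ∫_{t_l}^{t_u} exp(-d(t)) dt) with 0 < p^> < 1. Then (1/(t_u - t_l)) ∫_{t_l}^{t_u} d(t) dt ≤ log((t_u - t_l)/(-log(1 - p^>))) + β_i + β_j + R. -/
open Real MeasureTheory intervalIntegral Set

/-- Upper bound on the average squared distance between two node trajectories
bounded by `R`, in terms of the probability `p^>` of at least one event of the
inhomogeneous Poisson process with intensity `exp (β_i + β_j - d t)`. -/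
theorem average_sq_dist_upper_bound
    (tl tu : ℝ) (htu : tl < tu) (d : ℝ → ℝ)
    (hd : ContinuousOn d (Icc tl tu))
    (hd0 : ∀ t ∈ Icc tl tu, 0 ≤ d t)
    (R : ℝ) (hdR : ∀ t ∈ Icc tl tu, d t ≤ R)
    (βi βj : ℝ) (pgt : ℝ)
    (hpgt : pgt = 1 - Real.exp (-(Real.exp (βi + βj) * ∫ t in tl..tu, Real.exp (-d t))))
    (hpos : 0 < pgt) (hlt : pgt < 1) :
    (1 / (tu - tl)) * ∫ t in tl..tu, d t ≤
      Real.log ((tu - tl) / (-Real.log (1 - pgt))) + βi + βj + R := by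
  have hle : tl ≤ tu := htu.le
  have hT : (0:ℝ) < tu - tl := by linarith
  have huIcc : uIcc tl tu = Icc tl tu := uIcc_of_le hle
  have hdint : IntervalIntegrable d volume tl tu := by
    apply ContinuousOn.intervalIntegrable; rwa [huIcc]
  have heint : IntervalIntegrable (fun t => Real.exp (-d t)) volume tl tu := by
    apply ContinuousOn.intervalIntegrable
    rw [huIcc]
    exact (Real.continuous_exp.comp continuous_neg).comp_continuousOn hd
  set I := ∫ t in tl..tu, Real.exp (-d t) with hI
  -- I > 0 from hpos
  have hIpos : 0 < I := by
    by_contra h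
    push_neg at h
    have : Real.exp (βi + βj) * I ≤ 0 :=
      mul_nonpos_of_nonneg_of_nonpos (Real.exp_pos _).le h
    have : (1:ℝ) ≤ Real.exp (-(Real.exp (βi + βj) * I)) := by
      rw [← Real.exp_zero]; exact Real.exp_le_exp.mpr (by linarith)
    rw [hpgt] at hpos; linarith
  -- 1 - pgt
  have h1p : 1 - pgt = Real.exp (-(Real.exp (βi + βj) * I)) := by rw [hpgt]; ring
  have hlog : -Real.log (1 - pgt) = Real.exp (βi + βj) * I := by
    rw [h1p, Real.log_exp]; ring
  -- I ≤ T
  have hIle : I ≤ tu - tl := by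
    calc I ≤ ∫ _ in tl..tu, (1:ℝ) := by
            apply intervalIntegral.integral_mono_on hle heint intervalIntegrable_const
            intro t ht
            rw [← Real.exp_zero]
            exact Real.exp_le_exp.mpr (by linarith [hd0 t ht])
      _ = tu - tl := by simp
  -- ∫ d ≤ R * T
  have hdle : (∫ t in tl..tu, d t) ≤ R * (tu - tl) := by
    calc (∫ t in tl..tu, d t) ≤ ∫ _ in tl..tu, R :=
          intervalIntegral.integral_mono_on hle hdint intervalIntegrable_const hdR
      _ = R * (tu - tl) := by simp [mul_comm]
  -- rewrite RHS
  have hrhs : Real.log ((tu - tl) / (-Real.log (1 - pgt))) + βi + βj + R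
      = Real.log (tu - tl) - Real.log I + R := by
    rw [hlog, Real.log_div hT.ne' (by positivity), Real.log_mul (Real.exp_pos _).ne' hIpos.ne',
      Real.log_exp]
    ring
  rw [hrhs]
  have h1 : (1 / (tu - tl)) * ∫ t in tl..tu, d t ≤ R := by
    rw [div_mul_eq_mul_div, one_mul, div_le_iff₀ hT]
    linarith
  have h2 : Real.log I ≤ Real.log (tu - tl) := Real.log_le_log hIpos hIle
  linarith
end
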